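/- For every positive integer n, non-negative integer m, and real q with 0 < q < 1: ∑_{n ≥ k ≥ k_1 ≥ ⋯ ≥ k_m ≥ 1} (-1)^{k+1} q^{k(k-1)/2} C_q(n,k) ∏_{j=1}^m [k_j]_q^{-1} = [n]_q^{-m}. -/

import Mathlib

/-- Gaussian binomial coefficient, vanishing unless `k ≤ n`. -/
noncomputable def qbinom (q : ℝ) (n k : ℕ) : ℝ :=
  if k ≤ n then ∏ j ∈ Finset.Icc 1 k, (1 - q ^ (n - k + j)) / (1 - q ^ j) else 0

/-- The `q`-analog of a natural number: `[k]_q = (1-q^k)/(1-q)`. -/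
noncomputable def qnum (q : ℝ) (k : ℕ) : ℝ := (1 - q ^ k) / (1 - q)

/-- `∑_{n ≥ k₁ ≥ ⋯ ≥ k_m ≥ 1} ∏_j 1/[k_j]_q`. -/
noncomputable def nestedInvQ (q : ℝ) : ℕ → ℕ → ℝ
  | _, 0 => 1
  | n, m + 1 => ∑ k ∈ Finset.Icc 1 n, (1 / qnum q k) * nestedInvQ q k m

section aux

variable {q : ℝ}

/-- q-Pochhammer-type product `∏_{j=1}^n (1-q^j)`. -/
noncomputable def qprod (q : ℝ) (n : ℕ) : ℝ := ∏ j ∈ Finset.Icc 1 n, (1 - q ^ j)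

lemma one_sub_pow_pos (hq0 : 0 < q) (hq1 : q < 1) {j : ℕ} (hj : 1 ≤ j) : 0 < 1 - q ^ j := by
  have : q ^ j < 1 := pow_lt_one₀ hq0.le hq1 (by omega)
  linarith

lemma qprod_pos (hq0 : 0 < q) (hq1 : q < 1) (n : ℕ) : 0 < qprod q n :=
  Finset.prod_pos fun j hj => one_sub_pow_pos hq0 hq1 (Finset.mem_Icc.mp hj).1

lemma qprod_ne (hq0 : 0 < q) (hq1 : q < 1) (n : ℕ) : qprod q n ≠ 0 :=
  (qprod_pos hq0 hq1 n).ne'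

lemma qprod_zero : qprod q 0 = 1 := by simp [qprod]

lemma qprod_succ (n : ℕ) : qprod q (n + 1) = qprod q n * (1 - q ^ (n + 1)) :=
  Finset.prod_Icc_succ_top (by omega) _

lemma qprod_range (n : ℕ) : qprod q n = ∏ i ∈ Finset.range n, (1 - q ^ (1 + i)) := by
  rw [qprod, ← Finset.Ico_add_one_right_eq_Icc, Finset.prod_Ico_eq_prod_range]; simp

lemma qbinom_eq (hq0 : 0 < q) (hq1 : q < 1) {n k : ℕ} (hk : k ≤ n) :
    qbinom q n k = qprod q n / (qprod q k * qprod q (n - k)) := by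
  unfold qbinom
  rw [if_pos hk, Finset.prod_div_distrib]
  have h1 : ∏ j ∈ Finset.Icc 1 k, (1 - q ^ (n - k + j))
      = ∏ i ∈ Finset.range k, (1 - q ^ (1 + (n - k + i))) := by
    rw [← Finset.Ico_add_one_right_eq_Icc, Finset.prod_Ico_eq_prod_range]
    simp only [Nat.succ_sub_one, Nat.add_sub_cancel]
    exact Finset.prod_congr rfl fun i _ => by rw [show n - k + (1 + i) = 1 + (n - k + i) from by omega]
  have h2 : qprod q n = qprod q (n - k) * ∏ i ∈ Finset.range k, (1 - q ^ (1 + (n - k + i))) := by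
    rw [qprod_range, qprod_range, show n = (n - k) + k from by omega, Finset.prod_range_add]
    simp only [Nat.add_sub_cancel]
  rw [h1, ← qprod, h2]
  have hknz := qprod_ne hq0 hq1 k
  have hnknz := qprod_ne hq0 hq1 (n - k)
  field_simp

lemma qbinom_self (hq0 : 0 < q) (hq1 : q < 1) (n : ℕ) : qbinom q n n = 1 := by
  rw [qbinom_eq hq0 hq1 le_rfl, Nat.sub_self, qprod_zero, mul_one,
    div_self (qprod_ne hq0 hq1 n)]

lemma qbinom_zero (n : ℕ) : qbinom q n 0 = 1 := by simp [qbinom]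

lemma qbinom_of_gt {n k : ℕ} (h : n < k) : qbinom q n k = 0 := by
  simp [qbinom, Nat.not_le.mpr h]

lemma qbinom_one (hq0 : 0 < q) (hq1 : q < 1) (n : ℕ) : qbinom q (n + 1) 1 = qnum q (n + 1) := by
  simp [qbinom, qnum]

lemma qnum_one (hq1 : q < 1) : qnum q 1 = 1 := by
  simp [qnum]
  intro h; linarith

lemma qnum_ne (hq0 : 0 < q) (hq1 : q < 1) (n : ℕ) : qnum q (n + 1) ≠ 0 := by
  have h1 := one_sub_pow_pos hq0 hq1 (j := n + 1) (by omega)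
  have h2 : (0:ℝ) < 1 - q := by linarith
  exact ne_of_gt (div_pos h1 h2)

/-- q-Pascal identity. -/
lemma qpascal (hq0 : 0 < q) (hq1 : q < 1) {n j : ℕ} (hj : j ≤ n) :
    qbinom q (n + 1) (j + 1) = q ^ (j + 1) * qbinom q n (j + 1) + qbinom q n j := by
  rcases eq_or_lt_of_le hj with rfl | hjn
  · rw [qbinom_self hq0 hq1, qbinom_self hq0 hq1, qbinom_of_gt (by omega)]
    ring
  · obtain ⟨d, rfl⟩ : ∃ d, n = j + 1 + d := ⟨n - (j+1), by omega⟩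
    rw [qbinom_eq hq0 hq1 (by omega), qbinom_eq hq0 hq1 (by omega), qbinom_eq hq0 hq1 (by omega)]
    rw [show j + 1 + d + 1 - (j + 1) = d + 1 from by omega,
      show j + 1 + d - (j + 1) = d from by omega,
      show j + 1 + d - j = d + 1 from by omega]
    rw [show j + 1 + d + 1 = (j + 1 + d) + 1 from rfl, qprod_succ, qprod_succ, qprod_succ]
    have h1 := qprod_ne hq0 hq1 j
    have h2 := qprod_ne hq0 hq1 d
    have h3 := qprod_ne hq0 hq1 (j + 1 + d)
    have h4 := (one_sub_pow_pos hq0 hq1 (j := j + 1) (by omega)).ne'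
    have h5 := (one_sub_pow_pos hq0 hq1 (j := d + 1) (by omega)).ne'
    field_simp
    rw [show (j + 1 + d) + 1 = (j + 1) + (d + 1) from by omega, pow_add]
    ring

/-- ratio identity: `C_q(n,j) [n+1]_q = C_q(n+1,j+1) [j+1]_q`. -/
lemma qratio (hq0 : 0 < q) (hq1 : q < 1) {n j : ℕ} (hj : j ≤ n) :
    qbinom q n j * qnum q (n + 1) = qbinom q (n + 1) (j + 1) * qnum q (j + 1) := by
  obtain ⟨d, rfl⟩ : ∃ d, n = j + d := ⟨n - j, by omega⟩
  rw [qbinom_eq hq0 hq1 (by omega), qbinom_eq hq0 hq1 (by omega)]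
  rw [show j + d - j = d from by omega, show j + d + 1 - (j + 1) = d from by omega]
  rw [show j + d + 1 = (j + d) + 1 from rfl, qprod_succ, qprod_succ, qnum, qnum]
  have h1 := qprod_ne hq0 hq1 j
  have h2 := qprod_ne hq0 hq1 d
  have h3 := qprod_ne hq0 hq1 (j + d)
  have h4 : (1:ℝ) - q ≠ 0 := by linarith
  have h5 := (one_sub_pow_pos hq0 hq1 (j := j + 1) (by omega)).ne'
  field_simp

lemma nested_one (hq1 : q < 1) (m : ℕ) : nestedInvQ q 1 m = 1 := by
  induction m with
  | zero => rfl
  | succ m ih => simp [nestedInvQ, qnum_one hq1, ih]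

lemma nested_succ (k m : ℕ) :
    nestedInvQ q (k + 1) (m + 1)
      = nestedInvQ q k (m + 1) + (1 / qnum q (k + 1)) * nestedInvQ q (k + 1) m := by
  show (∑ j ∈ Finset.Icc 1 (k+1), (1 / qnum q j) * nestedInvQ q j m) = _
  rw [Finset.sum_Icc_succ_top (by omega)]
  rfl

lemma tri (k : ℕ) : (k + 1) * k / 2 = k * (k - 1) / 2 + k := by
  rcases k with _ | j
  · simp
  · obtain ⟨t, ht⟩ := Nat.even_mul_succ_self j
    have ht' : (j + 1) * j = 2 * t := by rw [mul_comm]; omega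
    rw [show (j+1+1)*(j+1) = (j+1)*j + 2*(j+1) from by ring, ht',
      show (j+1)*(j+1-1) = 2*t from by simpa using ht']
    omega

/-- sign-power coefficient -/
noncomputable def qc (q : ℝ) (k : ℕ) : ℝ := (-1 : ℝ) ^ (k + 1) * q ^ (k * (k - 1) / 2)

lemma qc_succ (k : ℕ) : qc q (k + 1) = -(qc q k * q ^ k) := by
  unfold qc
  simp only [Nat.add_sub_cancel]
  rw [tri k, pow_add]
  ring

/-- Key structural identity. -/
lemma step (hq0 : 0 < q) (hq1 : q < 1) (n m : ℕ) :
    ∑ i ∈ Finset.range (n + 1), qc q (1 + i) * qbinom q (n + 1) (1 + i) * nestedInvQ q (1 + i) m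
    = 1 + ∑ i ∈ Finset.range n, qc q (1 + i) * q ^ (1 + i) * qbinom q n (1 + i)
        * (nestedInvQ q (1 + i) m - nestedInvQ q (1 + i + 1) m) := by
  have hP : ∀ i ∈ Finset.range (n + 1),
      qc q (1 + i) * qbinom q (n + 1) (1 + i) * nestedInvQ q (1 + i) m
      = qc q (1 + i) * q ^ (1 + i) * qbinom q n (1 + i) * nestedInvQ q (1 + i) m
        + qc q (1 + i) * qbinom q n i * nestedInvQ q (1 + i) m := by
    intro i hi
    rw [show 1 + i = i + 1 from by omega, qpascal hq0 hq1 (by have := Finset.mem_range.mp hi; omega)]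
    ring
  rw [Finset.sum_congr rfl hP, Finset.sum_add_distrib]
  -- first sum: drop last (i = n) term
  rw [Finset.sum_range_succ]
  rw [show qbinom q n (1 + n) = 0 from qbinom_of_gt (by omega)]
  -- second sum: peel first (i = 0) term
  rw [Finset.sum_range_succ' (fun i => qc q (1 + i) * qbinom q n i * nestedInvQ q (1 + i) m) n]
  simp only [qbinom_zero]
  rw [show qc q (1 + 0) = 1 from by simp [qc], nested_one hq1]
  have hc : ∀ i, qc q (1 + (i + 1)) = -(qc q (1 + i) * q ^ (1 + i)) := by
    intro i
    rw [show 1 + (i + 1) = (1 + i) + 1 from by omega, qc_succ]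
  have h2 : ∀ i ∈ Finset.range n,
      qc q (1 + (i + 1)) * qbinom q n (i + 1) * nestedInvQ q (1 + (i + 1)) m
      = -(qc q (1 + i) * q ^ (1 + i) * qbinom q n (1 + i) * nestedInvQ q (1 + i + 1) m) := by
    intro i _
    rw [hc i, show (1:ℕ) + (i + 1) = 1 + i + 1 from by omega, show i + 1 = 1 + i from by omega]
    ring
  rw [Finset.sum_congr rfl h2]
  have h3 : ∀ i ∈ Finset.range n,
      qc q (1 + i) * q ^ (1 + i) * qbinom q n (1 + i)
        * (nestedInvQ q (1 + i) m - nestedInvQ q (1 + i + 1) m)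
      = qc q (1 + i) * q ^ (1 + i) * qbinom q n (1 + i) * nestedInvQ q (1 + i) m
        + -(qc q (1 + i) * q ^ (1 + i) * qbinom q n (1 + i) * nestedInvQ q (1 + i + 1) m) := by
    intro i _; ring
  rw [Finset.sum_congr rfl h3, Finset.sum_add_distrib]
  ring

/-- The recursion in `m`. -/
lemma Srec (hq0 : 0 < q) (hq1 : q < 1) (N m : ℕ) :
    ∑ i ∈ Finset.range (N + 1),
        qc q (1 + i) * qbinom q (N + 1) (1 + i) * nestedInvQ q (1 + i) (m + 1)
    = (∑ i ∈ Finset.range (N + 1),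
        qc q (1 + i) * qbinom q (N + 1) (1 + i) * nestedInvQ q (1 + i) m) / qnum q (N + 1) := by
  rw [step hq0 hq1 N (m + 1)]
  have hterm : ∀ i ∈ Finset.range N,
      qc q (1 + i) * q ^ (1 + i) * qbinom q N (1 + i)
        * (nestedInvQ q (1 + i) (m + 1) - nestedInvQ q (1 + i + 1) (m + 1))
      = qc q (1 + (i + 1)) * qbinom q (N + 1) (1 + (i + 1)) * nestedInvQ q (1 + (i + 1)) m
          / qnum q (N + 1) := by
    intro i hi
    have hiN : 1 + i ≤ N := by have := Finset.mem_range.mp hi; omega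
    have hd := nested_succ (q := q) (1 + i) m
    have hr := qratio hq0 hq1 hiN
    have hqc : qc q (1 + i + 1) = -(qc q (1 + i) * q ^ (1 + i)) := qc_succ (1 + i)
    have hnz1 : qnum q (1 + i + 1) ≠ 0 := by
      have := qnum_ne hq0 hq1 (i + 1); rwa [show i + 1 + 1 = 1 + i + 1 from by omega] at this
    have hnzN : qnum q (N + 1) ≠ 0 := qnum_ne hq0 hq1 N
    rw [hd, show (1:ℕ) + (i + 1) = 1 + i + 1 from by omega, hqc]
    field_simp
    linear_combination (-(qc q (1 + i) * nestedInvQ q (1 + i + 1) m)) * hr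
  rw [Finset.sum_congr rfl hterm, ← Finset.sum_div]
  rw [Finset.sum_range_succ'
    (fun i => qc q (1 + i) * qbinom q (N + 1) (1 + i) * nestedInvQ q (1 + i) m) N]
  rw [show qc q (1 + 0) = 1 from by simp [qc], show (1:ℕ) + 0 = 1 from rfl,
    qbinom_one hq0 hq1, nested_one hq1]
  have hnzN : qnum q (N + 1) ≠ 0 := qnum_ne hq0 hq1 N
  field_simp
  ring

end aux

theorem An_zero_ones (n : ℕ) (hn : 0 < n) (m : ℕ) (q : ℝ) (hq0 : 0 < q) (hq1 : q < 1) :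
    ∑ k ∈ Finset.Icc 1 n,
        (-1 : ℝ) ^ (k + 1) * q ^ (k * (k - 1) / 2) * qbinom q n k * nestedInvQ q k m
    = ((qnum q n)⁻¹) ^ m := by
  obtain ⟨N, rfl⟩ : ∃ N, n = N + 1 := ⟨n - 1, by omega⟩
  have hIcc : ∀ m', (∑ k ∈ Finset.Icc 1 (N + 1),
      (-1 : ℝ) ^ (k + 1) * q ^ (k * (k - 1) / 2) * qbinom q (N + 1) k * nestedInvQ q k m')
      = ∑ i ∈ Finset.range (N + 1),
        qc q (1 + i) * qbinom q (N + 1) (1 + i) * nestedInvQ q (1 + i) m' := by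
    intro m'
    rw [← Finset.Ico_add_one_right_eq_Icc, Finset.sum_Ico_eq_sum_range]
    simp [qc]
  induction m with
  | zero =>
    rw [hIcc, step hq0 hq1 N 0]
    have : ∀ i ∈ Finset.range N,
        qc q (1 + i) * q ^ (1 + i) * qbinom q N (1 + i)
          * (nestedInvQ q (1 + i) 0 - nestedInvQ q (1 + i + 1) 0) = 0 := by
      intro i _
      show qc q (1 + i) * q ^ (1 + i) * qbinom q N (1 + i) * ((1:ℝ) - 1) = 0
      ring
    rw [Finset.sum_congr rfl this]
    simp
  | succ m ih =>
    rw [hIcc] at ih ⊢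
    rw [Srec hq0 hq1, ih, pow_succ, div_eq_mul_inv]
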